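/- Let {0,…,n−1} be partitioned into pairwise disjoint sets A, B, C. The map P ↦ P ∩ ((A×B) ∪ (B×C)) is a bijection from U_{ABC}(n) onto the powerset of (A×B) ∪ (B×C); its inverse sends a subset S ⊆ (A×B) ∪ (B×C) to the transitive closure of S. -/

import Mathlib

/-- A strict partial order on a type, identified with its set of ordered pairs:
an irreflexive transitive binary relation. -/
def IsSPO {α : Type*} (P : Set (α × α)) : Prop :=
  (∀ x : α, (x, x) ∉ P) ∧ ∀ x y z : α, (x, y) ∈ P → (y, z) ∈ P → (x, z) ∈ P

/-- The covering relation `P^∨ = P \ P²` of `P`. -/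
def covRel {α : Type*} (P : Set (α × α)) : Set (α × α) :=
  {p | p ∈ P ∧ ¬ ∃ z : α, (p.1, z) ∈ P ∧ (z, p.2) ∈ P}

/-- `P ∈ U_{ABC}(n)`: a strict partial order on `{0,…,n-1}` whose covering
relation satisfies `P^∨ ⊆ (A×B) ∪ (B×C)`. -/
def UABC (n : ℕ) (A B C : Finset (Fin n)) (P : Set (Fin n × Fin n)) : Prop :=
  IsSPO P ∧ covRel P ⊆ (↑A ×ˢ ↑B) ∪ (↑B ×ˢ ↑C)

/-- The transitive closure of a set of ordered pairs. -/
def tcl {α : Type*} (S : Set (α × α)) : Set (α × α) :=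
  {p | Relation.TransGen (fun x y : α => (x, y) ∈ S) p.1 p.2}

section Aux

variable {n : ℕ} {A B C : Finset (Fin n)}

lemma memW {x y : Fin n} :
    (x, y) ∈ ((↑A ×ˢ ↑B) ∪ (↑B ×ˢ ↑C) : Set (Fin n × Fin n)) ↔
      (x ∈ A ∧ y ∈ B) ∨ (x ∈ B ∧ y ∈ C) := by
  simp [Set.mem_prod]

lemma tcl_structure (hAB : Disjoint A B) (hAC : Disjoint A C) (hBC : Disjoint B C)
    {S : Set (Fin n × Fin n)} (hS : S ⊆ (↑A ×ˢ ↑B) ∪ (↑B ×ˢ ↑C))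
    {x y : Fin n} (h : (x, y) ∈ tcl S) :
    (x, y) ∈ S ∨ ∃ b, (x, b) ∈ S ∧ (b, y) ∈ S ∧ x ∈ A ∧ b ∈ B ∧ y ∈ C := by
  simp only [tcl, Set.mem_setOf_eq] at h
  induction h with
  | single h => exact Or.inl h
  | tail h1 h2 ih =>
    rename_i m z
    rcases ih with hxm | ⟨b, _, _, _, _, hmC⟩
    · rcases memW.mp (hS h2) with ⟨hmA, hzB⟩ | ⟨hmB, hzC⟩
      · rcases memW.mp (hS hxm) with ⟨hxA, hmB⟩ | ⟨hxB, hmC⟩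
        · exact absurd hmA (Finset.disjoint_right.mp hAB hmB)
        · exact absurd hmA (Finset.disjoint_right.mp hAC hmC)
      · rcases memW.mp (hS hxm) with ⟨hxA, hmB'⟩ | ⟨hxB, hmC⟩
        · exact Or.inr ⟨m, hxm, h2, hxA, hmB', hzC⟩
        · exact absurd hmB (Finset.disjoint_right.mp hBC hmC)
    · rcases memW.mp (hS h2) with ⟨hmA, _⟩ | ⟨hmB, _⟩
      · exact absurd hmA (Finset.disjoint_right.mp hAC hmC)
      · exact absurd hmB (Finset.disjoint_right.mp hBC hmC)

lemma tcl_mem_of_mem {α : Type*} {S : Set (α × α)} {x y : α} (h : (x, y) ∈ S) :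
    (x, y) ∈ tcl S :=
  Relation.TransGen.single h

lemma tcl_subset_of_trans {P S : Set (Fin n × Fin n)} (hP : IsSPO P) (hSP : S ⊆ P) :
    tcl S ⊆ P := by
  rintro ⟨x, y⟩ h
  simp only [tcl, Set.mem_setOf_eq] at h
  induction h with
  | single h => exact hSP h
  | tail _ h2 ih => exact hP.2 _ _ _ ih (hSP h2)

lemma spo_sub_tcl_covRel {P : Set (Fin n × Fin n)} (h : IsSPO P) :
    P ⊆ tcl (covRel P) := by
  have key : ∀ k (x y : Fin n), {w | (x, w) ∈ P ∧ (w, y) ∈ P}.ncard ≤ k →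
      (x, y) ∈ P → (x, y) ∈ tcl (covRel P) := by
    intro k
    induction k with
    | zero =>
      intro x y hc hxy
      refine Relation.TransGen.single ⟨hxy, ?_⟩
      rintro ⟨z, hz1, hz2⟩
      have hne : {w | (x, w) ∈ P ∧ (w, y) ∈ P}.Nonempty := ⟨z, hz1, hz2⟩
      have := (Set.ncard_pos (Set.toFinite _)).mpr hne
      omega
    | succ k ih =>
      intro x y hc hxy
      by_cases hcov : (x, y) ∈ covRel P
      · exact Relation.TransGen.single hcov
      · have hz : ∃ z, (x, z) ∈ P ∧ (z, y) ∈ P := by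
          by_contra hne
          exact hcov ⟨hxy, hne⟩
        obtain ⟨z, hz1, hz2⟩ := hz
        have hs1 : {w | (x, w) ∈ P ∧ (w, z) ∈ P} ⊂ {w | (x, w) ∈ P ∧ (w, y) ∈ P} := by
          constructor
          · rintro w ⟨h1, h2⟩
            exact ⟨h1, h.2 _ _ _ h2 hz2⟩
          · intro hsub
            exact h.1 z (hsub ⟨hz1, hz2⟩).2
        have hs2 : {w | (z, w) ∈ P ∧ (w, y) ∈ P} ⊂ {w | (x, w) ∈ P ∧ (w, y) ∈ P} := by
          constructor
          · rintro w ⟨h1, h2⟩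
            exact ⟨h.2 _ _ _ hz1 h1, h2⟩
          · intro hsub
            exact h.1 z (hsub ⟨hz1, hz2⟩).1
        have hc1 := Set.ncard_lt_ncard hs1 (Set.toFinite _)
        have hc2 := Set.ncard_lt_ncard hs2 (Set.toFinite _)
        exact Relation.TransGen.trans
          (ih x z (by omega) hz1) (ih z y (by omega) hz2)
  exact fun p hp => key _ p.1 p.2 le_rfl hp

lemma tcl_eq_self {P : Set (Fin n × Fin n)} (hP : UABC n A B C P) :
    tcl (P ∩ ((↑A ×ˢ ↑B) ∪ (↑B ×ˢ ↑C))) = P := by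
  apply Set.Subset.antisymm
  · exact tcl_subset_of_trans hP.1 Set.inter_subset_left
  · intro p hp
    have h1 := spo_sub_tcl_covRel hP.1 hp
    simp only [tcl, Set.mem_setOf_eq] at h1 ⊢
    exact Relation.TransGen.mono (fun a b hab => ⟨hab.1, hP.2 hab⟩) _ _ h1

lemma tcl_UABC (hAB : Disjoint A B) (hAC : Disjoint A C) (hBC : Disjoint B C)
    {S : Set (Fin n × Fin n)} (hS : S ⊆ (↑A ×ˢ ↑B) ∪ (↑B ×ˢ ↑C)) :
    UABC n A B C (tcl S) := by
  constructor
  · constructor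
    · intro x hx
      rcases tcl_structure hAB hAC hBC hS hx with h | ⟨b, _, _, hA, _, hC⟩
      · rcases memW.mp (hS h) with ⟨h1, h2⟩ | ⟨h1, h2⟩
        · exact Finset.disjoint_left.mp hAB h1 h2
        · exact Finset.disjoint_left.mp hBC h1 h2
      · exact Finset.disjoint_left.mp hAC hA hC
    · exact fun x y z hxy hyz => Relation.TransGen.trans hxy hyz
  · rintro ⟨x, y⟩ ⟨hmem, hnc⟩
    rcases tcl_structure hAB hAC hBC hS hmem with h | ⟨b, h1, h2, _⟩
    · exact hS h
    · exact absurd ⟨b, tcl_mem_of_mem h1, tcl_mem_of_mem h2⟩ hnc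

lemma tcl_inter (hAB : Disjoint A B) (hAC : Disjoint A C) (hBC : Disjoint B C)
    {S : Set (Fin n × Fin n)} (hS : S ⊆ (↑A ×ˢ ↑B) ∪ (↑B ×ˢ ↑C)) :
    tcl S ∩ ((↑A ×ˢ ↑B) ∪ (↑B ×ˢ ↑C)) = S := by
  apply Set.Subset.antisymm
  · rintro ⟨x, y⟩ ⟨hmem, hW⟩
    rcases tcl_structure hAB hAC hBC hS hmem with h | ⟨b, _, _, hA, _, hC⟩
    · exact h
    · rcases memW.mp hW with ⟨_, hyB⟩ | ⟨hxB, _⟩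
      · exact absurd hyB (Finset.disjoint_right.mp hBC hC)
      · exact absurd hxB (Finset.disjoint_left.mp hAB hA)
  · exact fun p hp => ⟨tcl_mem_of_mem (x := p.1) (y := p.2) hp, hS hp⟩

end Aux

/-- if `{0,…,n-1}` is partitioned into `A`, `B`, `C`, then
`P ↦ P ∩ ((A×B) ∪ (B×C))` is a bijection from `U_{ABC}(n)` onto the powerset of
`(A×B) ∪ (B×C)`, whose inverse sends a subset to its transitive closure. -/
theorem stmt11 (n : ℕ) (A B C : Finset (Fin n))
    (hAB : Disjoint A B) (hAC : Disjoint A C) (hBC : Disjoint B C)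
    (hcover : A ∪ B ∪ C = Finset.univ) :
    Set.BijOn (fun P : Set (Fin n × Fin n) => P ∩ ((↑A ×ˢ ↑B) ∪ (↑B ×ˢ ↑C)))
      {P | UABC n A B C P}
      {S | S ⊆ (↑A ×ˢ ↑B) ∪ (↑B ×ˢ ↑C)} ∧
    (∀ P : Set (Fin n × Fin n), UABC n A B C P →
      tcl (P ∩ ((↑A ×ˢ ↑B) ∪ (↑B ×ˢ ↑C))) = P) ∧
    (∀ S : Set (Fin n × Fin n), S ⊆ (↑A ×ˢ ↑B) ∪ (↑B ×ˢ ↑C) →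
      UABC n A B C (tcl S) ∧ tcl S ∩ ((↑A ×ˢ ↑B) ∪ (↑B ×ˢ ↑C)) = S) := by
  refine ⟨⟨fun P _ => Set.inter_subset_right, ?_, ?_⟩, fun P hP => tcl_eq_self hP,
    fun S hS => ⟨tcl_UABC hAB hAC hBC hS, tcl_inter hAB hAC hBC hS⟩⟩
  · intro P hP Q hQ himg
    have := congrArg tcl himg
    rwa [tcl_eq_self hP, tcl_eq_self hQ] at this
  · intro S hS
    exact ⟨tcl S, tcl_UABC hAB hAC hBC hS, tcl_inter hAB hAC hBC hS⟩
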